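/- Let E be a finite type, let J be a nonempty finite index set, and for each j ∈ J let w_j : E → ℝ≥0 be a nonnegative weight function. Define the XOS function v(S) := max_{j ∈ J} Σ_{i ∈ S} w_j(i), and let y be a natural number. Then the item truncation v'(S) := max_{T ⊆ S, |T| ≤ y} v(T) is again XOS: there exist a nonempty finite index set J' and nonnegative weight functions w'_j : E → ℝ≥0 for j ∈ J' such that v'(S) = max_{j ∈ J'} Σ_{i ∈ S} w'_j(i) for every S. (That is, the class of XOS valuations is closed under item truncation.) -/
import Mathlib


open Finset

/-- Item truncation at `y` of a real-valued set function:
`v'(S) = max_{T ⊆ S, |T| ≤ y} v(T)` (the empty set is always a candidate). -/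
noncomputable def itemTruncR {E : Type*} (y : ℕ) (v : Finset E → ℝ)
    (S : Finset E) : ℝ :=
  (S.powerset.filter (fun T => T.card ≤ y)).sup' ⟨∅, by simp⟩ v

/-- XOS valuations are closed under item truncation: if
`v(S) = max_{j ∈ J} Σ_{i ∈ S} w_j(i)` for a nonempty finite index set `J` and
nonnegative weights `w_j`, then for any `y` the item truncation
`v'(S) = max_{T ⊆ S, |T| ≤ y} v(T)` is again a pointwise maximum of finitely
many nonnegative additive functions. -/
theorem xos_closed_under_itemTruncation
    {E : Type*} [Fintype E] [DecidableEq E]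
    {ι : Type*} (J : Finset ι) (hJ : J.Nonempty)
    (w : ι → E → ℝ) (hw : ∀ j ∈ J, ∀ i : E, 0 ≤ w j i)
    (v : Finset E → ℝ)
    (hv : ∀ S : Finset E, v S = J.sup' hJ (fun j => ∑ i ∈ S, w j i))
    (y : ℕ) :
    ∃ (ι' : Type) (J' : Finset ι') (hJ' : J'.Nonempty) (w' : ι' → E → ℝ),
      (∀ j ∈ J', ∀ i : E, 0 ≤ w' j i) ∧
      (∀ S : Finset E,
        itemTruncR y v S = J'.sup' hJ' (fun j => ∑ i ∈ S, w' j i)) := by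
  classical
  set K : Finset (ι × Finset E) :=
    J ×ˢ ((Finset.univ : Finset E).powerset.filter (fun T => T.card ≤ y)) with hK
  have hKne : K.Nonempty := by
    obtain ⟨j0, hj0⟩ := hJ
    exact ⟨(j0, ∅), by simp [hK, hj0]⟩
  let e : {x // x ∈ K} ≃ Fin K.card := K.equivFin
  let w' : Fin K.card → E → ℝ := fun k i =>
    if i ∈ (e.symm k).1.2 then w (e.symm k).1.1 i else 0
  have hKmem : ∀ x : {x // x ∈ K}, x.1.1 ∈ J ∧ x.1.2.card ≤ y := by
    intro x
    have := x.2
    simp only [hK, Finset.mem_product, Finset.mem_filter, Finset.mem_powerset] at this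
    exact ⟨this.1, this.2.2⟩
  have hne : (Finset.univ : Finset (Fin K.card)).Nonempty := by
    have : 0 < K.card := Finset.card_pos.mpr hKne
    exact ⟨⟨0, this⟩, Finset.mem_univ _⟩
  refine ⟨Fin K.card, Finset.univ, hne, w', ?_, ?_⟩
  · intro k _ i
    simp only [w']
    split
    · exact hw _ (hKmem (e.symm k)).1 i
    · exact le_refl 0
  · intro S
    have hSne : (S.powerset.filter (fun T => T.card ≤ y)).Nonempty := ⟨∅, by simp⟩
    -- key: ∑_{i∈S} w' k i = ∑_{i ∈ S ∩ T} w j i where (j,T) = e.symm k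
    have hsum : ∀ k : Fin K.card,
        ∑ i ∈ S, w' k i = ∑ i ∈ S ∩ (e.symm k).1.2, w (e.symm k).1.1 i := by
      intro k
      rw [show S ∩ (e.symm k).1.2 = S.filter (· ∈ (e.symm k).1.2) by
        ext i; simp [Finset.mem_filter]]
      rw [← Finset.sum_filter]
    apply le_antisymm
    · -- itemTruncR ≤ sup'
      rw [itemTruncR]
      apply Finset.sup'_le
      intro T hT
      simp only [Finset.mem_filter, Finset.mem_powerset] at hT
      rw [hv]
      apply Finset.sup'_le
      intro j hj
      have hx : (j, T) ∈ K := by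
        simp [hK, hj, hT.2]
      refine le_trans ?_ (Finset.le_sup' (fun k => ∑ i ∈ S, w' k i)
        (Finset.mem_univ (e ⟨(j, T), hx⟩)))
      rw [hsum, Equiv.symm_apply_apply]
      have hST : S ∩ T = T := Finset.inter_eq_right.mpr hT.1
      rw [hST]
    · apply Finset.sup'_le
      intro k _
      rw [hsum]
      set x := e.symm k
      have hx := hKmem x
      have hmem : S ∩ x.1.2 ∈ S.powerset.filter (fun T => T.card ≤ y) := by
        simp only [Finset.mem_filter, Finset.mem_powerset]
        exact ⟨Finset.inter_subset_left,
          le_trans (Finset.card_le_card Finset.inter_subset_right) hx.2⟩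
      refine le_trans ?_ (Finset.le_sup' v hmem)
      rw [hv]
      exact Finset.le_sup' (fun j => ∑ i ∈ S ∩ x.1.2, w j i) hx.1
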